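/- Let α ∈ ℝ^{N×N} be bi-stochastic, let κ ≥ 1, let W ∈ ℝ^N have strictly positive entries, and let g ∈ ℝ^N satisfy κ^{−1} ≤ g_j ≤ κ for all j. Define W'_i = Σ_{j=1}^N α_{ij} W_j g_j, and the normalised vectors W̄_j = W_j / Σ_k W_k and W̄'_i = W'_i / Σ_k W'_k. Then ‖W̄'‖² ≤ κ⁴ ( (1 − λ(α)²)/N + λ(α)² ‖W̄‖² ), where ‖·‖ is the Euclidean norm. -/

import Mathlib

open scoped BigOperators

/-- The Euclidean norm of a vector in `ℝ^N`. -/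
noncomputable def eucNorm {N : ℕ} (v : Fin N → ℝ) : ℝ := Real.sqrt (∑ i, v i ^ 2)

/-- A matrix is bi-stochastic if it has nonnegative entries and every row sum and
every column sum equals `1`. -/
def BiStochastic {N : ℕ} (α : Matrix (Fin N) (Fin N) ℝ) : Prop :=
  (∀ i j, 0 ≤ α i j) ∧ (∀ i, ∑ j, α i j = 1) ∧ (∀ j, ∑ i, α i j = 1)

/-- The mixing constant `λ(α) = sup { ‖αv‖ : ‖v‖ = 1, ⟨v, 1⟩ = 0 }`. -/
noncomputable def mixConst {N : ℕ} (α : Matrix (Fin N) (Fin N) ℝ) : ℝ :=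
  sSup {r : ℝ | ∃ v : Fin N → ℝ, eucNorm v = 1 ∧ (∑ i, v i) = 0 ∧ r = eucNorm (α.mulVec v)}

lemma eucNorm_nonneg {N : ℕ} (v : Fin N → ℝ) : 0 ≤ eucNorm v := Real.sqrt_nonneg _

lemma eucNorm_sq {N : ℕ} (v : Fin N → ℝ) : eucNorm v ^ 2 = ∑ i, v i ^ 2 :=
  Real.sq_sqrt (Finset.sum_nonneg fun i _ => sq_nonneg _)

lemma eucNorm_smul {N : ℕ} (c : ℝ) (v : Fin N → ℝ) :
    eucNorm (c • v) = |c| * eucNorm v := by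
  unfold eucNorm
  rw [← Real.sqrt_sq_eq_abs, ← Real.sqrt_mul (sq_nonneg c), Finset.mul_sum]
  congr 1
  apply Finset.sum_congr rfl
  intro i _
  simp [mul_pow]

lemma mix_bdd {N : ℕ} (α : Matrix (Fin N) (Fin N) ℝ) :
    BddAbove {r : ℝ | ∃ v : Fin N → ℝ, eucNorm v = 1 ∧ (∑ i, v i) = 0 ∧ r = eucNorm (α.mulVec v)} := by
  refine ⟨Real.sqrt (∑ i, ∑ j, α i j ^ 2), ?_⟩
  rintro r ⟨v, hv1, -, rfl⟩
  unfold eucNorm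
  apply Real.sqrt_le_sqrt
  apply Finset.sum_le_sum
  intro i _
  calc α.mulVec v i ^ 2 = (∑ j, α i j * v j) ^ 2 := by
        simp [Matrix.mulVec, dotProduct]
    _ ≤ (∑ j, α i j ^ 2) * ∑ j, v j ^ 2 := Finset.sum_mul_sq_le_sq_mul_sq _ _ _
    _ = ∑ j, α i j ^ 2 := by
        have : ∑ j, v j ^ 2 = 1 := by
          have := eucNorm_sq v; rw [hv1] at this; linarith
        rw [this, mul_one]

lemma mix_bound {N : ℕ} (α : Matrix (Fin N) (Fin N) ℝ) (u : Fin N → ℝ)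
    (hu : ∑ i, u i = 0) : eucNorm (α.mulVec u) ≤ mixConst α * eucNorm u := by
  by_cases h0 : eucNorm u = 0
  · have : ∑ i, u i ^ 2 = 0 := by
      have := eucNorm_sq u; rw [h0] at this; simpa using this.symm
    have hz : u = 0 := by
      funext i
      have h2 := (Finset.sum_eq_zero_iff_of_nonneg (fun i _ => sq_nonneg (u i))).mp this i (Finset.mem_univ i)
      exact pow_eq_zero_iff two_ne_zero |>.mp h2
    subst hz
    rw [Matrix.mulVec_zero, h0, mul_zero]
  · have hc : 0 < eucNorm u := lt_of_le_of_ne (eucNorm_nonneg u) (Ne.symm h0)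
    set c := eucNorm u with hcdef
    have hv1 : eucNorm (c⁻¹ • u) = 1 := by
      rw [eucNorm_smul, abs_of_pos (inv_pos.mpr hc), inv_mul_cancel₀ (ne_of_gt hc)]
    have hv2 : ∑ i, (c⁻¹ • u) i = 0 := by
      simp [Pi.smul_apply, smul_eq_mul, ← Finset.mul_sum, hu]
    have hmem : eucNorm (α.mulVec (c⁻¹ • u)) ≤ mixConst α :=
      le_csSup (mix_bdd α) ⟨c⁻¹ • u, hv1, hv2, rfl⟩
    have heq : eucNorm (α.mulVec (c⁻¹ • u)) = c⁻¹ * eucNorm (α.mulVec u) := by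
      rw [Matrix.mulVec_smul, eucNorm_smul, abs_of_pos (inv_pos.mpr hc)]
    rw [heq] at hmem
    calc eucNorm (α.mulVec u) = c * (c⁻¹ * eucNorm (α.mulVec u)) := by
          field_simp
      _ ≤ c * mixConst α := by
          apply mul_le_mul_of_nonneg_left hmem (le_of_lt hc)
      _ = mixConst α * c := mul_comm _ _

theorem stmt3 {N : ℕ} (α : Matrix (Fin N) (Fin N) ℝ) (hα : BiStochastic α)
    (κ : ℝ) (hκ : 1 ≤ κ)
    (W : Fin N → ℝ) (hW : ∀ j, 0 < W j)
    (g : Fin N → ℝ) (hg : ∀ j, κ⁻¹ ≤ g j ∧ g j ≤ κ) :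
    eucNorm (fun i => (∑ j, α i j * W j * g j) / (∑ k, ∑ j, α k j * W j * g j)) ^ 2
      ≤ κ ^ 4 * ((1 - mixConst α ^ 2) / N
          + mixConst α ^ 2 * eucNorm (fun j => W j / ∑ k, W k) ^ 2) := by
  obtain ⟨hpos, hrow, hcol⟩ := hα
  have hκ0 : (0:ℝ) < κ := lt_of_lt_of_le one_pos hκ
  rcases Nat.eq_zero_or_pos N with hN | hN
  · subst hN
    have hmix : mixConst α = 0 := by
      have hempty : {r : ℝ | ∃ v : Fin 0 → ℝ, eucNorm v = 1 ∧ (∑ i, v i) = 0 ∧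
          r = eucNorm (α.mulVec v)} = ∅ := by
        ext r
        simp only [Set.mem_setOf_eq, Set.mem_empty_iff_false, iff_false, not_exists]
        intro v
        have : eucNorm v = 0 := by unfold eucNorm; simp
        simp [this]
      rw [mixConst, hempty, Real.sSup_empty]
    have hL : eucNorm (fun i : Fin 0 => (∑ j, α i j * W j * g j) /
        (∑ k, ∑ j, α k j * W j * g j)) = 0 := by unfold eucNorm; simp
    have hR : eucNorm (fun j : Fin 0 => W j / ∑ k, W k) = 0 := by unfold eucNorm; simp
    rw [hL, hR, hmix]
    norm_num
  have hNR : (0:ℝ) < N := by exact_mod_cast hN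
  set S := ∑ k, W k with hSdef
  have hS : 0 < S := Finset.sum_pos (fun j _ => hW j) ⟨⟨0, hN⟩, Finset.mem_univ _⟩
  set v : Fin N → ℝ := fun j => W j / S with hvdef
  have hv1 : ∑ j, v j = 1 := by
    rw [hvdef, ← Finset.sum_div]; exact div_self (ne_of_gt hS)
  set u : Fin N → ℝ := fun j => v j - 1 / N with hudef
  have hu0 : ∑ j, u j = 0 := by
    rw [hudef]
    rw [Finset.sum_sub_distrib, hv1, Finset.sum_const, Finset.card_fin]
    rw [nsmul_eq_mul, mul_one_div_cancel (ne_of_gt hNR), sub_self]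
  set T := ∑ k, ∑ j, α k j * W j * g j with hTdef
  have hT1 : κ⁻¹ * S ≤ T := by
    rw [hTdef, Finset.sum_comm]
    calc κ⁻¹ * S = ∑ j, κ⁻¹ * W j := by rw [hSdef, Finset.mul_sum]
      _ = ∑ j, ∑ k, α k j * W j * κ⁻¹ := by
          apply Finset.sum_congr rfl
          intro j _
          rw [← Finset.sum_mul, ← Finset.sum_mul, hcol j, one_mul, mul_comm]
      _ ≤ ∑ j, ∑ k, α k j * W j * g j := by
          apply Finset.sum_le_sum; intro j _
          apply Finset.sum_le_sum; intro k _
          exact mul_le_mul_of_nonneg_left (hg j).1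
            (mul_nonneg (hpos k j) (le_of_lt (hW j)))
  have hT : 0 < T := lt_of_lt_of_le (mul_pos (inv_pos.mpr hκ0) hS) hT1
  -- pointwise bound
  have hAnn : ∀ i, 0 ≤ ∑ j, α i j * W j :=
    fun i => Finset.sum_nonneg fun j _ => mul_nonneg (hpos i j) (le_of_lt (hW j))
  have hmv : ∀ i, α.mulVec v i = (∑ j, α i j * W j) / S := by
    intro i
    simp only [Matrix.mulVec, dotProduct, hvdef]
    rw [Finset.sum_div]
    apply Finset.sum_congr rfl
    intro j _
    rw [mul_div_assoc]
  have hmvnn : ∀ i, 0 ≤ α.mulVec v i := fun i => by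
    rw [hmv i]; exact div_nonneg (hAnn i) (le_of_lt hS)
  have key : ∀ i, ((∑ j, α i j * W j * g j) / T) ^ 2 ≤ κ ^ 4 * (α.mulVec v i) ^ 2 := by
    intro i
    have h1 : (∑ j, α i j * W j * g j) ≤ κ * ∑ j, α i j * W j := by
      rw [Finset.mul_sum]
      apply Finset.sum_le_sum; intro j _
      calc α i j * W j * g j ≤ α i j * W j * κ :=
            mul_le_mul_of_nonneg_left (hg j).2 (mul_nonneg (hpos i j) (le_of_lt (hW j)))
        _ = κ * (α i j * W j) := mul_comm _ _
    have h2 : (∑ j, α i j * W j * g j) / T ≤ (κ * ∑ j, α i j * W j) / (κ⁻¹ * S) :=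
      div_le_div₀ (mul_nonneg (le_of_lt hκ0) (hAnn i)) h1
        (mul_pos (inv_pos.mpr hκ0) hS) hT1
    have h3 : (κ * ∑ j, α i j * W j) / (κ⁻¹ * S) = κ ^ 2 * α.mulVec v i := by
      rw [hmv i]
      field_simp
    have h4 : (∑ j, α i j * W j * g j) / T ≤ κ ^ 2 * α.mulVec v i := by
      rw [← h3]; exact h2
    have h5 : 0 ≤ (∑ j, α i j * W j * g j) / T :=
      div_nonneg (Finset.sum_nonneg fun j _ => mul_nonneg
        (mul_nonneg (hpos i j) (le_of_lt (hW j))) (le_trans (le_of_lt (inv_pos.mpr hκ0)) (hg j).1))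
        (le_of_lt hT)
    calc ((∑ j, α i j * W j * g j) / T) ^ 2 ≤ (κ ^ 2 * α.mulVec v i) ^ 2 :=
          pow_le_pow_left₀ h5 h4 2
      _ = κ ^ 4 * (α.mulVec v i) ^ 2 := by ring
  -- mixing bound on A v
  have hdecomp : ∀ i, α.mulVec v i = 1 / N + α.mulVec u i := by
    intro i
    simp only [Matrix.mulVec, dotProduct, hudef]
    rw [Finset.sum_congr rfl (fun j _ => mul_sub (α i j) (v j) (1 / (N:ℝ))),
      Finset.sum_sub_distrib, ← Finset.sum_mul, hrow i, one_mul]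
    ring
  have hsum_u : ∑ i, α.mulVec u i = 0 := by
    simp only [Matrix.mulVec, dotProduct]
    rw [Finset.sum_comm]
    calc ∑ j, ∑ i, α i j * u j = ∑ j, (∑ i, α i j) * u j := by
          simp [Finset.sum_mul]
      _ = ∑ j, u j := by
          apply Finset.sum_congr rfl; intro j _; rw [hcol j, one_mul]
      _ = 0 := hu0
  have hAv : ∑ i, (α.mulVec v i) ^ 2 = 1 / N + ∑ i, (α.mulVec u i) ^ 2 := by
    calc ∑ i, (α.mulVec v i) ^ 2
        = ∑ i, ((1/(N:ℝ))^2 + 2*(1/N)*(α.mulVec u i) + (α.mulVec u i)^2) := by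
          apply Finset.sum_congr rfl; intro i _; rw [hdecomp i]; ring
      _ = (N:ℝ)*(1/N)^2 + 2*(1/N)*(∑ i, α.mulVec u i) + ∑ i, (α.mulVec u i)^2 := by
          rw [Finset.sum_add_distrib, Finset.sum_add_distrib, Finset.sum_const,
            Finset.card_fin, ← Finset.mul_sum]
          push_cast
          ring
      _ = 1 / N + ∑ i, (α.mulVec u i) ^ 2 := by
          rw [hsum_u]
          field_simp
          ring
  have hAu : ∑ i, (α.mulVec u i) ^ 2 ≤ mixConst α ^ 2 * ∑ i, u i ^ 2 := by
    have h := mix_bound α u hu0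
    have h2 := pow_le_pow_left₀ (eucNorm_nonneg _) h 2
    rw [mul_pow, eucNorm_sq, eucNorm_sq] at h2
    exact h2
  have hu_sq : ∑ j, u j ^ 2 = (∑ j, v j ^ 2) - 1 / N := by
    calc ∑ j, u j ^ 2 = ∑ j, (v j ^ 2 - 2*(1/N)*v j + (1/(N:ℝ))^2) := by
          apply Finset.sum_congr rfl; intro j _; rw [hudef]; ring
      _ = (∑ j, v j ^ 2) - 2*(1/N)*(∑ j, v j) + (N:ℝ)*(1/N)^2 := by
          rw [Finset.sum_add_distrib, Finset.sum_sub_distrib, Finset.sum_const,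
            Finset.card_fin, ← Finset.mul_sum]
          push_cast
          ring
      _ = (∑ j, v j ^ 2) - 1 / N := by
          rw [hv1]
          field_simp
          ring
  -- assemble
  have hmixnn : 0 ≤ mixConst α ^ 2 := sq_nonneg _
  have hfinal : ∑ i, (α.mulVec v i) ^ 2
      ≤ (1 - mixConst α ^ 2) / N + mixConst α ^ 2 * ∑ j, v j ^ 2 := by
    rw [hAv]
    have : mixConst α ^ 2 * ∑ j, u j ^ 2
        = mixConst α ^ 2 * (∑ j, v j ^ 2) - mixConst α ^ 2 * (1/N) := by
      rw [hu_sq]; ring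
    have hle := hAu
    rw [this] at hle
    have : (1 - mixConst α ^ 2) / N + mixConst α ^ 2 * ∑ j, v j ^ 2
        = 1/N + (mixConst α ^ 2 * (∑ j, v j ^ 2) - mixConst α ^ 2 * (1/N)) := by
      field_simp
      ring
    rw [this]
    linarith
  have hLHS : eucNorm (fun i => (∑ j, α i j * W j * g j) / T) ^ 2
      = ∑ i, ((∑ j, α i j * W j * g j) / T) ^ 2 := eucNorm_sq _
  have hRHS : eucNorm (fun j => W j / S) ^ 2 = ∑ j, v j ^ 2 := by
    rw [eucNorm_sq]
  calc eucNorm (fun i => (∑ j, α i j * W j * g j) / T) ^ 2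
      = ∑ i, ((∑ j, α i j * W j * g j) / T) ^ 2 := hLHS
    _ ≤ ∑ i, κ ^ 4 * (α.mulVec v i) ^ 2 := Finset.sum_le_sum fun i _ => key i
    _ = κ ^ 4 * ∑ i, (α.mulVec v i) ^ 2 := by rw [← Finset.mul_sum]
    _ ≤ κ ^ 4 * ((1 - mixConst α ^ 2) / N + mixConst α ^ 2 * ∑ j, v j ^ 2) := by
        apply mul_le_mul_of_nonneg_left hfinal
        positivity
    _ = κ ^ 4 * ((1 - mixConst α ^ 2) / N
          + mixConst α ^ 2 * eucNorm (fun j => W j / S) ^ 2) := by rw [hRHS]
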